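/- Suppose N ≤ D and the potential V^a: R^d → R is twice differentiable with −M₂ I_d ≼ ∇²V^a(q) ≼ M₂ I_d for all q. Define 𝒱(ξ) = β_D Σ_{j=0}^{D-1} V^a(x_N(jβ_D)) for ξ ∈ R^{dN} and the block matrix Σ ∈ R^{dN×dN} with blocks Σ_{kl} = (ω_k²+a)^{-1/2}(ω_l²+a)^{-1/2} ∇²_{ξ_k ξ_l} 𝒱(ξ). Then −(M₂/a) I_{dN} ≼ Σ ≼ (M₂/a) I_{dN}. -/

import Mathlib

open Real

noncomputable section

/-- Real Fourier basis functions on `[0, β]`. -/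
def fb (β : ℝ) (k : ℕ) (τ : ℝ) : ℝ :=
  if k = 0 then Real.sqrt (1 / β)
  else if k % 2 = 1 then Real.sqrt (2 / β) * Real.sin (2 * (((k + 1) / 2 : ℕ) : ℝ) * Real.pi * τ / β)
  else Real.sqrt (2 / β) * Real.cos (2 * ((k / 2 : ℕ) : ℝ) * Real.pi * τ / β)

/-- Matsubara frequencies: `ω_0 = 0`, `ω_{2k-1} = ω_{2k} = 2kπ/β`. -/
def om (β : ℝ) (k : ℕ) : ℝ := 2 * (((k + 1) / 2 : ℕ) : ℝ) * Real.pi / β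

lemma expSum (D : ℕ) (hD : 0 < D) (n : ℤ) :
    ∑ j ∈ Finset.range D, Complex.exp ((2 * π * n * j / D : ℝ) * Complex.I)
      = if (D : ℤ) ∣ n then (D : ℂ) else 0 := by
  have hDne : (D : ℝ) ≠ 0 := Nat.cast_ne_zero.mpr hD.ne'
  have hDC : (D : ℂ) ≠ 0 := Nat.cast_ne_zero.mpr hD.ne'
  set z : ℂ := Complex.exp ((2 * π * n / D : ℝ) * Complex.I) with hz
  have hterm : ∀ j : ℕ, Complex.exp ((2 * π * n * j / D : ℝ) * Complex.I) = z ^ j := by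
    intro j
    rw [hz, ← Complex.exp_nat_mul]
    congr 1
    push_cast
    ring
  have hzD : z ^ D = 1 := by
    rw [hz, ← Complex.exp_nat_mul, Complex.exp_eq_one_iff]
    refine ⟨n, ?_⟩
    push_cast
    field_simp
  by_cases h : (D : ℤ) ∣ n
  · obtain ⟨m, rfl⟩ := h
    have hz1 : z = 1 := by
      rw [hz, Complex.exp_eq_one_iff]
      refine ⟨m, ?_⟩
      push_cast
      field_simp
    rw [Finset.sum_congr rfl fun j _ => hterm j]
    simp [hz1]
  · have hz1 : z ≠ 1 := by
      intro hz1
      rw [hz, Complex.exp_eq_one_iff] at hz1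
      obtain ⟨m, hm⟩ := hz1
      apply h
      have him : (2 * π * n / D : ℝ) = (m : ℝ) * (2 * π) := by
        have := congrArg Complex.im hm
        simpa using this
      have hnm : (n : ℝ) = (m : ℝ) * D := by
        field_simp at him
        nlinarith [Real.pi_pos]
      exact ⟨m, by rw [mul_comm]; exact_mod_cast hnm⟩
    rw [if_neg h]
    calc ∑ j ∈ Finset.range D, Complex.exp ((2 * π * n * j / D : ℝ) * Complex.I)
        = ∑ j ∈ Finset.range D, z ^ j := Finset.sum_congr rfl fun j _ => hterm j
      _ = (z ^ D - 1) / (z - 1) := geom_sum_eq hz1 D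
      _ = 0 := by rw [hzD]; simp

lemma cosSum (D : ℕ) (hD : 0 < D) (n : ℤ) :
    ∑ j ∈ Finset.range D, Real.cos (2 * π * n * j / D)
      = if (D : ℤ) ∣ n then (D : ℝ) else 0 := by
  have := congrArg Complex.re (expSum D hD n)
  rw [Complex.re_sum] at this
  simp only [Complex.exp_ofReal_mul_I_re] at this
  convert this using 1
  split <;> simp

lemma sinSum (D : ℕ) (hD : 0 < D) (n : ℤ) :
    ∑ j ∈ Finset.range D, Real.sin (2 * π * n * j / D) = 0 := by
  have := congrArg Complex.im (expSum D hD n)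
  rw [Complex.im_sum] at this
  simp only [Complex.exp_ofReal_mul_I_im] at this
  convert this using 1
  split <;> simp

lemma notdvd {D : ℕ} {n : ℤ} (h1 : n ≠ 0) (h2 : |n| < D) : ¬ (D : ℤ) ∣ n := by
  intro hd
  have h3 : (D : ℤ) ∣ |n| := (dvd_abs _ _).mpr hd
  have := Int.le_of_dvd (abs_pos.mpr h1) h3
  omega

lemma sinsinSum (D : ℕ) (hD : 0 < D) (m m' : ℕ) :
    ∑ j ∈ Finset.range D, Real.sin (2*π*m*j/D) * Real.sin (2*π*m'*j/D)
    = ((if (D:ℤ) ∣ ((m:ℤ) - m') then (D:ℝ) else 0)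
        - (if (D:ℤ) ∣ ((m:ℤ) + m') then (D:ℝ) else 0)) / 2 := by
  have key : ∀ j : ℕ, Real.sin (2*π*m*j/D) * Real.sin (2*π*m'*j/D)
      = (Real.cos (2*π*(((m:ℤ) - m' : ℤ) : ℝ)*j/D) - Real.cos (2*π*(((m:ℤ) + m' : ℤ) : ℝ)*j/D))/2 := by
    intro j
    have h1 : 2*π*(((m:ℤ) - m' : ℤ) : ℝ)*j/D = 2*π*m*j/D - 2*π*m'*j/D := by push_cast; ring
    have h2 : 2*π*(((m:ℤ) + m' : ℤ) : ℝ)*j/D = 2*π*m*j/D + 2*π*m'*j/D := by push_cast; ring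
    rw [h1, h2, Real.cos_sub, Real.cos_add]; ring
  rw [Finset.sum_congr rfl fun j _ => key j, ← Finset.sum_div, Finset.sum_sub_distrib,
    cosSum D hD _, cosSum D hD _]

lemma coscosSum (D : ℕ) (hD : 0 < D) (m m' : ℕ) :
    ∑ j ∈ Finset.range D, Real.cos (2*π*m*j/D) * Real.cos (2*π*m'*j/D)
    = ((if (D:ℤ) ∣ ((m:ℤ) - m') then (D:ℝ) else 0)
        + (if (D:ℤ) ∣ ((m:ℤ) + m') then (D:ℝ) else 0)) / 2 := by
  have key : ∀ j : ℕ, Real.cos (2*π*m*j/D) * Real.cos (2*π*m'*j/D)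
      = (Real.cos (2*π*(((m:ℤ) - m' : ℤ) : ℝ)*j/D) + Real.cos (2*π*(((m:ℤ) + m' : ℤ) : ℝ)*j/D))/2 := by
    intro j
    have h1 : 2*π*(((m:ℤ) - m' : ℤ) : ℝ)*j/D = 2*π*m*j/D - 2*π*m'*j/D := by push_cast; ring
    have h2 : 2*π*(((m:ℤ) + m' : ℤ) : ℝ)*j/D = 2*π*m*j/D + 2*π*m'*j/D := by push_cast; ring
    rw [h1, h2, Real.cos_sub, Real.cos_add]; ring
  rw [Finset.sum_congr rfl fun j _ => key j, ← Finset.sum_div, Finset.sum_add_distrib,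
    cosSum D hD _, cosSum D hD _]

lemma sincosSum (D : ℕ) (hD : 0 < D) (m m' : ℕ) :
    ∑ j ∈ Finset.range D, Real.sin (2*π*m*j/D) * Real.cos (2*π*m'*j/D) = 0 := by
  have key : ∀ j : ℕ, Real.sin (2*π*m*j/D) * Real.cos (2*π*m'*j/D)
      = (Real.sin (2*π*(((m:ℤ) + m' : ℤ) : ℝ)*j/D) + Real.sin (2*π*(((m:ℤ) - m' : ℤ) : ℝ)*j/D))/2 := by
    intro j
    have h1 : 2*π*(((m:ℤ) - m' : ℤ) : ℝ)*j/D = 2*π*m*j/D - 2*π*m'*j/D := by push_cast; ring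
    have h2 : 2*π*(((m:ℤ) + m' : ℤ) : ℝ)*j/D = 2*π*m*j/D + 2*π*m'*j/D := by push_cast; ring
    rw [h1, h2, Real.sin_sub, Real.sin_add]; ring
  rw [Finset.sum_congr rfl fun j _ => key j, ← Finset.sum_div, Finset.sum_add_distrib,
    sinSum D hD _, sinSum D hD _]
  norm_num

lemma sinSum' (D : ℕ) (hD : 0 < D) (m : ℕ) :
    ∑ j ∈ Finset.range D, Real.sin (2*π*m*j/D) = 0 := by
  have := sinSum D hD (m : ℤ)
  simpa using this

lemma cosSum' (D : ℕ) (hD : 0 < D) (m : ℕ) (hm : 0 < m) (hmD : m < D) :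
    ∑ j ∈ Finset.range D, Real.cos (2*π*m*j/D) = 0 := by
  have := cosSum D hD (m : ℤ)
  rw [if_neg (notdvd (by omega) (by rw [abs_lt]; omega))] at this
  simpa using this


lemma fb_grid (β : ℝ) (hβ : 0 < β) (D : ℕ) (hD : 0 < D) (k j : ℕ) :
    fb β k ((j:ℝ) * (β/D)) =
      if k = 0 then Real.sqrt (1/β)
      else if k % 2 = 1 then Real.sqrt (2/β) * Real.sin (2*π*(((k+1)/2 : ℕ):ℝ)*j/D)
      else Real.sqrt (2/β) * Real.cos (2*π*((k/2 : ℕ):ℝ)*j/D) := by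
  have hβ' : (β:ℝ) ≠ 0 := hβ.ne'
  have hD' : (D:ℝ) ≠ 0 := Nat.cast_ne_zero.mpr hD.ne'
  have harg : ∀ m : ℕ, 2 * (m:ℝ) * π * ((j:ℝ)*(β/D)) / β = 2*π*m*j/D := by
    intro m; field_simp
  simp only [fb]
  split_ifs with h1 h2
  · rfl
  · rw [harg]
  · rw [harg]

lemma fb_orth (β : ℝ) (hβ : 0 < β) (D : ℕ) (hD : 0 < D) {k l : ℕ}
    (hk : k < D) (hl : l < D) (hkl : k ≠ l) :
    ∑ j ∈ Finset.range D, fb β k ((j:ℝ)*(β/D)) * fb β l ((j:ℝ)*(β/D)) = 0 := by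
  have e0 : ∀ j : ℕ, fb β 0 ((j:ℝ)*(β/D)) = Real.sqrt (1/β) := fun j => by
    rw [fb_grid β hβ D hD]; simp
  have eodd : ∀ n j : ℕ, n % 2 = 1 →
      fb β n ((j:ℝ)*(β/D)) = Real.sqrt (2/β) * Real.sin (2*π*(((n+1)/2 : ℕ):ℝ)*j/D) := by
    intro n j hn
    rw [fb_grid β hβ D hD, if_neg (by omega), if_pos hn]
  have eeven : ∀ n j : ℕ, n ≠ 0 → n % 2 = 0 →
      fb β n ((j:ℝ)*(β/D)) = Real.sqrt (2/β) * Real.cos (2*π*((n/2 : ℕ):ℝ)*j/D) := by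
    intro n j hn0 hn
    rw [fb_grid β hβ D hD, if_neg hn0, if_neg (by omega)]
  obtain hk0 | hk1 | hk2 : k = 0 ∨ k % 2 = 1 ∨ (k ≠ 0 ∧ k % 2 = 0) := by omega
  all_goals obtain hl0 | hl1 | hl2 : l = 0 ∨ l % 2 = 1 ∨ (l ≠ 0 ∧ l % 2 = 0) := by omega
  · exact absurd (hk0.trans hl0.symm) hkl
  · -- k = 0, l odd
    subst hk0
    calc ∑ j ∈ Finset.range D, fb β 0 ((j:ℝ)*(β/D)) * fb β l ((j:ℝ)*(β/D))
        = (Real.sqrt (1/β) * Real.sqrt (2/β)) *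
            ∑ j ∈ Finset.range D, Real.sin (2*π*(((l+1)/2 : ℕ):ℝ)*j/D) := by
          rw [Finset.mul_sum]
          exact Finset.sum_congr rfl fun j _ => by rw [e0 j, eodd l j hl1]; ring
      _ = 0 := by rw [sinSum' D hD]; ring
  · -- k = 0, l even
    subst hk0
    calc ∑ j ∈ Finset.range D, fb β 0 ((j:ℝ)*(β/D)) * fb β l ((j:ℝ)*(β/D))
        = (Real.sqrt (1/β) * Real.sqrt (2/β)) *
            ∑ j ∈ Finset.range D, Real.cos (2*π*((l/2 : ℕ):ℝ)*j/D) := by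
          rw [Finset.mul_sum]
          exact Finset.sum_congr rfl fun j _ => by rw [e0 j, eeven l j hl2.1 hl2.2]; ring
      _ = 0 := by rw [cosSum' D hD _ (by omega) (by omega)]; ring
  · -- k odd, l = 0
    subst hl0
    calc ∑ j ∈ Finset.range D, fb β k ((j:ℝ)*(β/D)) * fb β 0 ((j:ℝ)*(β/D))
        = (Real.sqrt (1/β) * Real.sqrt (2/β)) *
            ∑ j ∈ Finset.range D, Real.sin (2*π*(((k+1)/2 : ℕ):ℝ)*j/D) := by
          rw [Finset.mul_sum]
          exact Finset.sum_congr rfl fun j _ => by rw [e0 j, eodd k j hk1]; ring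
      _ = 0 := by rw [sinSum' D hD]; ring
  · -- k odd, l odd
    have hm : 1 ≤ (k+1)/2 ∧ 2*((k+1)/2) ≤ D := by omega
    have hm' : 1 ≤ (l+1)/2 ∧ 2*((l+1)/2) ≤ D := by omega
    have hne : (k+1)/2 ≠ (l+1)/2 := by omega
    calc ∑ j ∈ Finset.range D, fb β k ((j:ℝ)*(β/D)) * fb β l ((j:ℝ)*(β/D))
        = (Real.sqrt (2/β) * Real.sqrt (2/β)) *
            ∑ j ∈ Finset.range D,
              Real.sin (2*π*(((k+1)/2 : ℕ):ℝ)*j/D) * Real.sin (2*π*(((l+1)/2 : ℕ):ℝ)*j/D) := by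
          rw [Finset.mul_sum]
          exact Finset.sum_congr rfl fun j _ => by rw [eodd k j hk1, eodd l j hl1]; ring
      _ = 0 := by
          rw [sinsinSum D hD,
            if_neg (notdvd (by omega) (by rw [abs_lt]; omega)),
            if_neg (fun hd => by have := Int.le_of_dvd (by omega) hd; omega)]
          ring
  · -- k odd, l even
    calc ∑ j ∈ Finset.range D, fb β k ((j:ℝ)*(β/D)) * fb β l ((j:ℝ)*(β/D))
        = (Real.sqrt (2/β) * Real.sqrt (2/β)) *
            ∑ j ∈ Finset.range D,
              Real.sin (2*π*(((k+1)/2 : ℕ):ℝ)*j/D) * Real.cos (2*π*((l/2 : ℕ):ℝ)*j/D) := by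
          rw [Finset.mul_sum]
          exact Finset.sum_congr rfl fun j _ => by rw [eodd k j hk1, eeven l j hl2.1 hl2.2]; ring
      _ = 0 := by rw [sincosSum D hD]; ring
  · -- k even, l = 0
    subst hl0
    calc ∑ j ∈ Finset.range D, fb β k ((j:ℝ)*(β/D)) * fb β 0 ((j:ℝ)*(β/D))
        = (Real.sqrt (1/β) * Real.sqrt (2/β)) *
            ∑ j ∈ Finset.range D, Real.cos (2*π*((k/2 : ℕ):ℝ)*j/D) := by
          rw [Finset.mul_sum]
          exact Finset.sum_congr rfl fun j _ => by rw [e0 j, eeven k j hk2.1 hk2.2]; ring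
      _ = 0 := by rw [cosSum' D hD _ (by omega) (by omega)]; ring
  · -- k even, l odd
    calc ∑ j ∈ Finset.range D, fb β k ((j:ℝ)*(β/D)) * fb β l ((j:ℝ)*(β/D))
        = (Real.sqrt (2/β) * Real.sqrt (2/β)) *
            ∑ j ∈ Finset.range D,
              Real.sin (2*π*(((l+1)/2 : ℕ):ℝ)*j/D) * Real.cos (2*π*((k/2 : ℕ):ℝ)*j/D) := by
          rw [Finset.mul_sum]
          exact Finset.sum_congr rfl fun j _ => by rw [eodd l j hl1, eeven k j hk2.1 hk2.2]; ring
      _ = 0 := by rw [sincosSum D hD]; ring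
  · -- k even, l even
    have hm : 1 ≤ k/2 ∧ 2*(k/2) < D := by omega
    have hm' : 1 ≤ l/2 ∧ 2*(l/2) < D := by omega
    have hne : k/2 ≠ l/2 := by omega
    calc ∑ j ∈ Finset.range D, fb β k ((j:ℝ)*(β/D)) * fb β l ((j:ℝ)*(β/D))
        = (Real.sqrt (2/β) * Real.sqrt (2/β)) *
            ∑ j ∈ Finset.range D,
              Real.cos (2*π*((k/2 : ℕ):ℝ)*j/D) * Real.cos (2*π*((l/2 : ℕ):ℝ)*j/D) := by
          rw [Finset.mul_sum]
          exact Finset.sum_congr rfl fun j _ => by rw [eeven k j hk2.1 hk2.2, eeven l j hl2.1 hl2.2]; ring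
      _ = 0 := by
          rw [coscosSum D hD,
            if_neg (notdvd (by omega) (by rw [abs_lt]; omega)),
            if_neg (notdvd (by omega) (by rw [abs_lt]; omega))]
          ring

lemma fb_diag (β : ℝ) (hβ : 0 < β) (D : ℕ) (hD : 0 < D) {k : ℕ} (hk : k < D) :
    (β/D) * ∑ j ∈ Finset.range D, fb β k ((j:ℝ)*(β/D)) * fb β k ((j:ℝ)*(β/D)) ≤ 1 := by
  have hβ' : (β:ℝ) ≠ 0 := hβ.ne'
  have hD' : (D:ℝ) ≠ 0 := Nat.cast_ne_zero.mpr hD.ne'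
  have hDpos : (0:ℝ) < D := Nat.cast_pos.mpr hD
  have h2β : Real.sqrt (2/β) * Real.sqrt (2/β) = 2/β :=
    Real.mul_self_sqrt (by positivity)
  obtain hk0 | hk1 | hk2 : k = 0 ∨ k % 2 = 1 ∨ (k ≠ 0 ∧ k % 2 = 0) := by omega
  · subst hk0
    have e0 : ∀ j : ℕ, fb β 0 ((j:ℝ)*(β/D)) = Real.sqrt (1/β) := fun j => by
      rw [fb_grid β hβ D hD]; simp
    have e00 : ∀ j ∈ Finset.range D,
        fb β 0 ((j:ℝ)*(β/D)) * fb β 0 ((j:ℝ)*(β/D)) = 1/β := fun j _ => by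
      rw [e0 j]; exact Real.mul_self_sqrt (by positivity)
    rw [Finset.sum_congr rfl e00, Finset.sum_const, Finset.card_range, nsmul_eq_mul]
    have : β / D * ((D:ℝ) * (1/β)) = 1 := by field_simp
    rw [this]
  · -- k odd
    set m := (k+1)/2 with hm
    have eodd : ∀ j : ℕ,
        fb β k ((j:ℝ)*(β/D)) = Real.sqrt (2/β) * Real.sin (2*π*(m:ℝ)*j/D) := by
      intro j
      rw [fb_grid β hβ D hD, if_neg (by omega), if_pos hk1]
    have hsum : ∑ j ∈ Finset.range D, fb β k ((j:ℝ)*(β/D)) * fb β k ((j:ℝ)*(β/D))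
        = (2/β) * ∑ j ∈ Finset.range D, Real.sin (2*π*(m:ℝ)*j/D) * Real.sin (2*π*(m:ℝ)*j/D) := by
      rw [Finset.mul_sum]
      exact Finset.sum_congr rfl fun j _ => by rw [eodd j, mul_mul_mul_comm, h2β]
    rw [hsum, sinsinSum D hD m m]
    rw [sub_self, if_pos (dvd_zero _)]
    set s : ℝ := if (D:ℤ) ∣ ((m:ℤ) + m) then (D:ℝ) else 0 with hs
    have hs0 : 0 ≤ s := by
      rw [hs]; split
      · exact hDpos.le
      · exact le_refl 0
    have heq : β / D * ((2/β) * (((D:ℝ) - s)/2)) = ((D:ℝ) - s)/D := by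
      field_simp
    rw [heq, div_le_one hDpos]
    linarith
  · -- k even
    set m := k/2 with hm
    have eeven : ∀ j : ℕ,
        fb β k ((j:ℝ)*(β/D)) = Real.sqrt (2/β) * Real.cos (2*π*(m:ℝ)*j/D) := by
      intro j
      rw [fb_grid β hβ D hD, if_neg hk2.1, if_neg (by omega)]
    have hsum : ∑ j ∈ Finset.range D, fb β k ((j:ℝ)*(β/D)) * fb β k ((j:ℝ)*(β/D))
        = (2/β) * ∑ j ∈ Finset.range D, Real.cos (2*π*(m:ℝ)*j/D) * Real.cos (2*π*(m:ℝ)*j/D) := by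
      rw [Finset.mul_sum]
      exact Finset.sum_congr rfl fun j _ => by rw [eeven j, mul_mul_mul_comm, h2β]
    rw [hsum, coscosSum D hD m m]
    rw [sub_self, if_pos (dvd_zero _),
      if_neg (notdvd (by omega) (by rw [abs_lt]; omega))]
    have heq : β / D * ((2/β) * (((D:ℝ) + 0)/2)) = 1 := by field_simp; ring
    rw [heq]

/-- If `N ≤ D` and `−M₂ I ≼ ∇²V^a ≼ M₂ I`, then the frequency-weighted Hessian of the
discretized loop potential `𝒱(ξ) = β_D Σ_j V^a(x_N(jβ_D))` is bounded by `M₂/a` as a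
quadratic form: for any `ξ` and any `q ∈ ℝ^{dN}`, writing `w_k = (ω_k²+a)^{-1/2} q_k`,
`|⟨w, ∇²𝒱(ξ) w⟩| ≤ (M₂/a) Σ_k |q_k|²`. -/
theorem weighted_hessian_bound
    (d N D : ℕ) (hN : 0 < N) (hND : N ≤ D) (β a M₂ : ℝ)
    (hβ : 0 < β) (ha : 0 < a) (hM : 0 ≤ M₂)
    (Va : EuclideanSpace ℝ (Fin d) → ℝ)
    (hVa_smooth : ContDiff ℝ 2 Va)
    (hHess : ∀ q v : EuclideanSpace ℝ (Fin d),
      |iteratedFDeriv ℝ 2 Va q ![v, v]| ≤ M₂ * ‖v‖ ^ 2) :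
    ∀ (ξ q : Fin N → EuclideanSpace ℝ (Fin d)),
      |iteratedFDeriv ℝ 2
          (fun ζ : Fin N → EuclideanSpace ℝ (Fin d) =>
            (β / D) * ∑ j : Fin D, Va (∑ k : Fin N, fb β (k : ℕ) ((j : ℕ) * (β / D)) • ζ k)) ξ
          ![fun k => (Real.sqrt ((om β (k : ℕ)) ^ 2 + a))⁻¹ • q k,
            fun k => (Real.sqrt ((om β (k : ℕ)) ^ 2 + a))⁻¹ • q k]|
        ≤ (M₂ / a) * ∑ k : Fin N, ‖q k‖ ^ 2 := by
  intro ξ q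
  have hD : 0 < D := lt_of_lt_of_le hN hND
  have hDpos : (0:ℝ) < (D:ℝ) := Nat.cast_pos.mpr hD
  have hβD : (0:ℝ) ≤ β / D := by positivity
  set c : ℕ → ℕ → ℝ := fun k j => fb β k ((j:ℝ) * (β / D)) with hc
  set L : Fin D → ((Fin N → EuclideanSpace ℝ (Fin d)) →L[ℝ] EuclideanSpace ℝ (Fin d)) :=
    fun j => ∑ k : Fin N, c (k:ℕ) (j:ℕ) • (ContinuousLinearMap.proj k) with hLdef
  have hL : ∀ (j : Fin D) (ζ : Fin N → EuclideanSpace ℝ (Fin d)),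
      L j ζ = ∑ k : Fin N, c (k:ℕ) (j:ℕ) • ζ k := by
    intro j ζ
    simp [hLdef, ContinuousLinearMap.sum_apply, ContinuousLinearMap.smul_apply,
      ContinuousLinearMap.proj_apply]
  set w : Fin N → EuclideanSpace ℝ (Fin d) := fun k => (Real.sqrt ((om β (k : ℕ)) ^ 2 + a))⁻¹ • q k with hw
  -- rewrite the function
  have hfeq : (fun ζ : Fin N → EuclideanSpace ℝ (Fin d) =>
        (β / D) * ∑ j : Fin D, Va (∑ k : Fin N, fb β (k : ℕ) ((j : ℕ) * (β / D)) • ζ k))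
      = fun ζ => (β / D) • ∑ j : Fin D, Va (L j ζ) := by
    funext ζ
    rw [smul_eq_mul]
    congr 1
    exact Finset.sum_congr rfl fun j _ => congrArg Va (hL j ζ).symm
  rw [hfeq]
  have hVaL : ∀ j : Fin D, ContDiff ℝ 2 (fun ζ : Fin N → EuclideanSpace ℝ (Fin d) => Va (L j ζ)) :=
    fun j => hVa_smooth.comp (L j).contDiff
  have hsumC : ContDiff ℝ 2 (fun ζ : Fin N → EuclideanSpace ℝ (Fin d) => ∑ j : Fin D, Va (L j ζ)) :=
    ContDiff.sum fun j _ => hVaL j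
  rw [iteratedFDeriv_const_smul_apply' hsumC.contDiffAt]
  have hderiv_sum : iteratedFDeriv ℝ 2 (fun ζ : Fin N → EuclideanSpace ℝ (Fin d) => ∑ j : Fin D, Va (L j ζ)) ξ
      = ∑ j : Fin D, iteratedFDeriv ℝ 2 (fun ζ => Va (L j ζ)) ξ := by
    have := iteratedFDeriv_sum (𝕜 := ℝ)
      (f := fun (j : Fin D) (ζ : Fin N → EuclideanSpace ℝ (Fin d)) => Va (L j ζ)) (u := Finset.univ) (i := 2)
      (fun j _ => hVaL j)
    simpa using congrFun this ξ
  rw [hderiv_sum]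
  have hcomp : ∀ j : Fin D, iteratedFDeriv ℝ 2 (fun ζ : Fin N → EuclideanSpace ℝ (Fin d) => Va (L j ζ)) ξ
      = (iteratedFDeriv ℝ 2 Va (L j ξ)).compContinuousLinearMap (fun _ => L j) :=
    fun j => (L j).iteratedFDeriv_comp_right hVa_smooth ξ (by norm_num)
  -- apply to the vector
  rw [ContinuousMultilinearMap.smul_apply, ContinuousMultilinearMap.sum_apply]
  have happ : ∀ j : Fin D,
      (iteratedFDeriv ℝ 2 (fun ζ : Fin N → EuclideanSpace ℝ (Fin d) => Va (L j ζ)) ξ) ![w, w]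
      = iteratedFDeriv ℝ 2 Va (L j ξ) ![L j w, L j w] := by
    intro j
    rw [hcomp j, ContinuousMultilinearMap.compContinuousLinearMap_apply]
    congr 1
    funext i
    fin_cases i <;> rfl
  rw [Finset.sum_congr rfl fun j _ => happ j]
  rw [smul_eq_mul]
  -- bound
  have habs : |(β / D) * ∑ j : Fin D, iteratedFDeriv ℝ 2 Va (L j ξ) ![L j w, L j w]|
      ≤ (β / D) * ∑ j : Fin D, M₂ * ‖L j w‖ ^ 2 := by
    rw [abs_mul, abs_of_nonneg hβD]
    refine mul_le_mul_of_nonneg_left ?_ hβD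
    exact (Finset.abs_sum_le_sum_abs _ _).trans
      (Finset.sum_le_sum fun j _ => hHess (L j ξ) (L j w))
  refine habs.trans ?_
  -- the quadratic form bound via discrete orthogonality
  have hexp : ∀ j : Fin D, ‖L j w‖ ^ 2
      = ∑ k : Fin N, ∑ l : Fin N,
          (c (k:ℕ) (j:ℕ) * c (l:ℕ) (j:ℕ)) * (inner ℝ (w k) (w l) : ℝ) := by
    intro j
    rw [hL, ← real_inner_self_eq_norm_sq, sum_inner]
    refine Finset.sum_congr rfl fun k _ => ?_
    rw [inner_sum]
    refine Finset.sum_congr rfl fun l _ => ?_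
    rw [real_inner_smul_left, real_inner_smul_right]; ring
  have hquad : (β / D) * ∑ j : Fin D, ‖L j w‖ ^ 2 ≤ ∑ k : Fin N, ‖w k‖ ^ 2 := by
    calc (β / D) * ∑ j : Fin D, ‖L j w‖ ^ 2
        = ∑ j : Fin D, ∑ k : Fin N, ∑ l : Fin N,
            (β / D) * ((c (k:ℕ) (j:ℕ) * c (l:ℕ) (j:ℕ)) * (inner ℝ (w k) (w l) : ℝ)) := by
          rw [Finset.mul_sum]
          refine Finset.sum_congr rfl fun j _ => ?_
          rw [hexp j, Finset.mul_sum]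
          refine Finset.sum_congr rfl fun k _ => ?_
          rw [Finset.mul_sum]
      _ = ∑ k : Fin N, ∑ l : Fin N, ∑ j : Fin D,
            (β / D) * ((c (k:ℕ) (j:ℕ) * c (l:ℕ) (j:ℕ)) * (inner ℝ (w k) (w l) : ℝ)) := by
          rw [Finset.sum_comm]
          exact Finset.sum_congr rfl fun k _ => Finset.sum_comm
      _ = ∑ k : Fin N, ∑ l : Fin N,
            ((β / D) * ∑ j ∈ Finset.range D, c (k:ℕ) j * c (l:ℕ) j) * (inner ℝ (w k) (w l) : ℝ) := by
          refine Finset.sum_congr rfl fun k _ => Finset.sum_congr rfl fun l _ => ?_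
          rw [← Fin.sum_univ_eq_sum_range (fun j => c (k:ℕ) j * c (l:ℕ) j) D,
            Finset.mul_sum, Finset.sum_mul]
          exact Finset.sum_congr rfl fun j _ => by ring
      _ = ∑ k : Fin N,
            ((β / D) * ∑ j ∈ Finset.range D, c (k:ℕ) j * c (k:ℕ) j) * (inner ℝ (w k) (w k) : ℝ) := by
          refine Finset.sum_congr rfl fun k _ => ?_
          refine Finset.sum_eq_single k (fun l _ hlk => ?_) (fun h => absurd (Finset.mem_univ k) h)
          have hz : ∑ j ∈ Finset.range D, c (k:ℕ) j * c (l:ℕ) j = 0 := by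
            simp only [hc]
            exact fb_orth β hβ D hD (lt_of_lt_of_le k.isLt hND)
              (lt_of_lt_of_le l.isLt hND) (fun h => hlk (Fin.ext h.symm))
          rw [hz]
          ring
      _ ≤ ∑ k : Fin N, ‖w k‖ ^ 2 := by
          refine Finset.sum_le_sum fun k _ => ?_
          rw [real_inner_self_eq_norm_sq]
          have h1 : (β / D) * ∑ j ∈ Finset.range D, c (k:ℕ) j * c (k:ℕ) j ≤ 1 := by
            simp only [hc]
            exact fb_diag β hβ D hD (lt_of_lt_of_le k.isLt hND)
          have := mul_le_mul_of_nonneg_right h1 (sq_nonneg ‖w k‖)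
          simpa using this
  have hwk : ∀ k : Fin N, ‖w k‖ ^ 2 ≤ a⁻¹ * ‖q k‖ ^ 2 := by
    intro k
    have hx : (0:ℝ) ≤ om β (k:ℕ) ^ 2 + a := by positivity
    have heq : ‖w k‖ ^ 2 = (om β (k:ℕ) ^ 2 + a)⁻¹ * ‖q k‖ ^ 2 := by
      show ‖(Real.sqrt ((om β (k : ℕ)) ^ 2 + a))⁻¹ • q k‖ ^ 2 = _
      rw [norm_smul, norm_inv, Real.norm_eq_abs, abs_of_nonneg (Real.sqrt_nonneg _),
        mul_pow, inv_pow, Real.sq_sqrt hx]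
    rw [heq]
    refine mul_le_mul_of_nonneg_right ?_ (sq_nonneg _)
    exact inv_anti₀ ha (le_add_of_nonneg_left (sq_nonneg _))
  calc (β / D) * ∑ j : Fin D, M₂ * ‖L j w‖ ^ 2
      = M₂ * ((β / D) * ∑ j : Fin D, ‖L j w‖ ^ 2) := by
        rw [← Finset.mul_sum]
        ring
    _ ≤ M₂ * ∑ k : Fin N, ‖w k‖ ^ 2 := mul_le_mul_of_nonneg_left hquad hM
    _ ≤ M₂ * ∑ k : Fin N, a⁻¹ * ‖q k‖ ^ 2 :=
        mul_le_mul_of_nonneg_left (Finset.sum_le_sum fun k _ => hwk k) hM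
    _ = (M₂ / a) * ∑ k : Fin N, ‖q k‖ ^ 2 := by
        rw [Finset.mul_sum, Finset.mul_sum]
        exact Finset.sum_congr rfl fun k _ => by ring
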